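/- Let (X,d) be a ν-generalized metric space, T : X → X a Ćirić–Matkowski contraction, x ∈ X a point whose orbit {T^n x} consists of pairwise distinct points, and suppose {T^n x} converges in the strong sense to z ∈ X. Then z is a fixed point of T. -/

import Mathlib

open Filter Topology

/-- `(X,d)` is a ν-generalized metric space. -/
def NuGenMetric (ν : ℕ) {X : Type*} (d : X → X → ℝ) : Prop :=
  (∀ x y, 0 ≤ d x y) ∧
  (∀ x y, d x y = 0 ↔ x = y) ∧
  (∀ x y, d x y = d y x) ∧
  (∀ u : Fin (ν + 2) → X, Function.Injective u →
    d (u 0) (u (Fin.last (ν + 1))) ≤ ∑ i : Fin (ν + 1), d (u i.castSucc) (u i.succ))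

/-- `{x n}` is `k`-Cauchy: `lim_n sup_m d(x_n, x_{n+1+mk}) = 0` (sup taken in `[0,∞]`). -/
def IsKCauchy {X : Type*} (d : X → X → ℝ) (x : ℕ → X) (k : ℕ) : Prop :=
  Filter.Tendsto (fun n => ⨆ m : ℕ, ENNReal.ofReal (d (x n) (x (n + 1 + m * k))))
    Filter.atTop (nhds 0)

theorem stmt_16 {X : Type*} (ν : ℕ) (hν : 0 < ν) (d : X → X → ℝ)
    (hX : NuGenMetric ν d) (T : X → X)
    (hc : ∀ x y : X, x ≠ y → d (T x) (T y) < d x y)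
    (hcm : ∀ ε > (0 : ℝ), ∃ δ > (0 : ℝ), ∀ x y : X,
      d x y < δ + ε → d (T x) (T y) ≤ ε)
    (x : X) (hinj : Function.Injective (fun n : ℕ => T^[n] x)) (z : X)
    (hCauchy : IsKCauchy d (fun n => T^[n] x) 1)
    (hconv : Filter.Tendsto (fun n => d z (T^[n] x)) Filter.atTop (nhds 0)) :
    T z = z := by
  obtain ⟨hpos, heq, hsym, hpoly⟩ := hX
  set f : ℕ → X := fun n : ℕ => T^[n] x with hf
  -- f injective
  have hfinj : Function.Injective f := hinj
  -- orbit relation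
  have hstep : ∀ n : ℕ, f (n + 1) = T (f n) := by
    intro n; simp [hf, Function.iterate_succ_apply']
  by_contra hzT
  -- at most one orbit point equals a given point
  have hne : ∀ w : X, ∃ N : ℕ, ∀ m ≥ N, f m ≠ w := by
    intro w
    by_cases h : ∃ m, f m = w
    · obtain ⟨m0, hm0⟩ := h
      refine ⟨m0 + 1, fun m hm hcw => ?_⟩
      have := hfinj (hcw.trans hm0.symm)
      omega
    · exact ⟨0, fun m _ hcw => h ⟨m, hcw⟩⟩
  obtain ⟨N1, hN1⟩ := hne z
  obtain ⟨N2, hN2⟩ := hne (T z)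
  -- consecutive distances → 0
  have hcons : Tendsto (fun n => d (f n) (f (n + 1))) atTop (nhds 0) := by
    have h1 : Tendsto (fun n => ENNReal.ofReal (d (f n) (f (n + 1)))) atTop (nhds 0) := by
      apply tendsto_of_tendsto_of_tendsto_of_le_of_le tendsto_const_nhds hCauchy
      · intro n; exact zero_le
      · intro n
        have := le_iSup (fun m : ℕ => ENNReal.ofReal (d (f n) (f (n + 1 + m * 1)))) 0
        simpa using this
    have h2 := (ENNReal.tendsto_toReal (by simp : (0 : ENNReal) ≠ ⊤)).comp h1
    simp only [Function.comp_def, ENNReal.toReal_zero] at h2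
    exact h2.congr fun n => ENNReal.toReal_ofReal (hpos _ _)
  -- d (T z) (f m) → 0
  have hTz : Tendsto (fun m => d (T z) (f m)) atTop (nhds 0) := by
    have hub : ∀ᶠ m in atTop, d (T z) (f m) ≤ d z (f (m - 1)) := by
      filter_upwards [eventually_ge_atTop (N1 + 1)] with m hm
      have hm1 : m - 1 + 1 = m := by omega
      have hne' : z ≠ f (m - 1) := fun h => hN1 (m - 1) (by omega) h.symm
      have := hc z (f (m - 1)) hne'
      rw [← hstep (m - 1), hm1] at this
      exact this.le
    have hg : Tendsto (fun m => d z (f (m - 1))) atTop (nhds 0) :=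
      hconv.comp (tendsto_sub_atTop_nat 1)
    exact squeeze_zero' (Eventually.of_forall fun m => hpos _ _) hub hg
  set N := max N1 N2 with hN
  -- the polygon vertices
  set g : ℕ → ℕ → X := fun n i => if i = 0 then z else if i = ν + 1 then T z else f (n + i - 1)
    with hg
  have hg0 : ∀ n, g n 0 = z := by intro n; simp [hg]
  have hglast : ∀ n, g n (ν + 1) = T z := by intro n; simp [hg]
  have hgmid : ∀ n i, 1 ≤ i → i ≤ ν → g n i = f (n + i - 1) := by
    intro n i h1 h2
    simp only [hg]
    rw [if_neg (by omega), if_neg (by omega)]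
  -- each edge length tends to 0
  have hedge : ∀ i : ℕ, i ≤ ν → Tendsto (fun n => d (g n i) (g n (i + 1))) atTop (nhds 0) := by
    intro i hi
    rcases Nat.eq_zero_or_pos i with h0 | h1
    · subst h0
      have he : (fun n => d (g n 0) (g n 1)) = fun n => d z (f n) := by
        funext n
        rw [hg0, hgmid n 1 le_rfl hν]
        simp
      rw [he]; exact hconv
    rcases eq_or_lt_of_le hi with hiv | hlt
    · subst hiv
      have he : (fun n => d (g n i) (g n (i + 1))) = fun n => d (T z) (f (n + i - 1)) := by
        funext n
        rw [hgmid n i h1 le_rfl, hglast, hsym]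
      rw [he]
      have hmono : Tendsto (fun n : ℕ => n + i - 1) atTop atTop :=
        tendsto_atTop_mono (fun n => by omega : ∀ n : ℕ, n ≤ n + i - 1) tendsto_id
      exact hTz.comp hmono
    · have he : (fun n => d (g n i) (g n (i + 1))) = fun n => d (f (n + (i-1))) (f (n + (i-1) + 1)) := by
        funext n
        rw [hgmid n i h1 hi, hgmid n (i+1) (by omega) (by omega),
          show n + i - 1 = n + (i - 1) by omega,
          show n + (i + 1) - 1 = n + (i - 1) + 1 by omega]
      rw [he]
      exact hcons.comp (tendsto_add_atTop_nat (i - 1))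
  -- the sum tends to 0
  have hsum : Tendsto (fun n => ∑ i : Fin (ν + 1), d (g n i.val) (g n (i.val + 1)))
      atTop (nhds 0) := by
    have := tendsto_finset_sum (Finset.univ : Finset (Fin (ν + 1)))
      (fun i _ => hedge i.val (by omega))
    simpa using this
  -- polygonal inequality for large n
  have hineq : ∀ᶠ n in atTop, d z (T z) ≤ ∑ i : Fin (ν + 1), d (g n i.val) (g n (i.val + 1)) := by
    filter_upwards [eventually_ge_atTop N] with n hn
    set u : Fin (ν + 2) → X := fun i => g n i.val with hu
    have huinj : Function.Injective u := by
      intro i j hij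
      simp only [hu] at hij
      have hi := i.isLt
      have hj := j.isLt
      have key : ∀ a b : ℕ, a < ν + 2 → b < ν + 2 → g n a = g n b → a = b := by
        intro a b ha hb hab
        rcases Nat.eq_zero_or_pos a with ha0 | ha1 <;>
        rcases Nat.eq_zero_or_pos b with hb0 | hb1
        · omega
        · rcases eq_or_lt_of_le (by omega : b ≤ ν + 1) with hbv | hbv
          · exfalso; rw [ha0, hg0, hbv, hglast] at hab; exact hzT hab.symm
          · exfalso; rw [ha0, hg0, hgmid n b hb1 (by omega)] at hab
            exact hN1 _ (by omega) hab.symm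
        · rcases eq_or_lt_of_le (by omega : a ≤ ν + 1) with hav | hav
          · exfalso; rw [hb0, hg0, hav, hglast] at hab; exact hzT hab
          · exfalso; rw [hb0, hg0, hgmid n a ha1 (by omega)] at hab
            exact hN1 _ (by omega) hab
        · rcases eq_or_lt_of_le (by omega : a ≤ ν + 1) with hav | hav <;>
          rcases eq_or_lt_of_le (by omega : b ≤ ν + 1) with hbv | hbv
          · omega
          · exfalso; rw [hav, hglast, hgmid n b hb1 (by omega)] at hab
            exact hN2 _ (by omega) hab.symm
          · exfalso; rw [hbv, hglast, hgmid n a ha1 (by omega)] at hab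
            exact hN2 _ (by omega) hab
          · rw [hgmid n a ha1 (by omega), hgmid n b hb1 (by omega)] at hab
            have := hfinj hab
            omega
      exact Fin.ext (key i.val j.val hi hj hij)
    have hp := hpoly u huinj
    have hu0 : u 0 = z := by simp only [hu]; rw [show ((0 : Fin (ν+2)) : ℕ) = 0 from rfl, hg0]
    have hul : u (Fin.last (ν + 1)) = T z := by
      simp only [hu, Fin.val_last]; rw [hglast]
    rw [hu0, hul] at hp
    refine hp.trans_eq ?_
    apply Finset.sum_congr rfl
    intro i _
    simp only [hu, Fin.coe_castSucc, Fin.val_succ]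
  have hle : d z (T z) ≤ 0 := ge_of_tendsto hsum hineq
  have : d z (T z) = 0 := le_antisymm hle (hpos _ _)
  exact hzT ((heq _ _).mp this).symm
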